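/- With the update rules Q(t+1) = (Q(t) − μ_out(t))^+ + μ_in(t) and q(t+1) = q(t) − μ_out(t) + μ_in(t), both starting at 0, and with 0 ≤ μ_out(t) ≤ B for all t, we have 0 ≤ Q(t) − q(t) ≤ B · N(t) for all t, where N(t) = Σ_{τ<t} 1{Q(τ) < μ_out(τ)} counts the underflow ('null activity') events up to time t. -/

import Mathlib

/-- With `Q(t+1) = (Q(t) − μout(t))⁺ + μin(t)` and `q(t+1) = q(t) − μout(t) + μin(t)`,
both starting at 0, and `0 ≤ μout(t) ≤ B`, we have
`0 ≤ Q(t) − q(t) ≤ B · N(t)` where `N(t)` counts the null-activity (underflow) events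
`Q(τ) < μout(τ)` for `τ < t`. -/
theorem underflow_gap_bound (B : ℝ) (hB : 0 < B) (μout μin : ℕ → ℝ)
    (hout : ∀ t, 0 ≤ μout t) (houtB : ∀ t, μout t ≤ B) (hin : ∀ t, 0 ≤ μin t)
    (Q q : ℕ → ℝ) (hQ0 : Q 0 = 0) (hq0 : q 0 = 0)
    (hQ : ∀ t, Q (t + 1) = max (Q t - μout t) 0 + μin t)
    (hq : ∀ t, q (t + 1) = q t - μout t + μin t) :
    ∀ t, 0 ≤ Q t - q t ∧
      Q t - q t ≤ B * (∑ τ ∈ Finset.range t, if Q τ < μout τ then (1 : ℝ) else 0) := by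
  have hQnn : ∀ t, 0 ≤ Q t := by
    intro t
    cases t with
    | zero => simp [hQ0]
    | succ n =>
      rw [hQ n]
      have := hin n
      have : (0:ℝ) ≤ max (Q n - μout n) 0 := le_max_right _ _
      linarith [hin n]
  intro t
  induction t with
  | zero => simp [hQ0, hq0]
  | succ n ih =>
    obtain ⟨ih1, ih2⟩ := ih
    rw [hQ n, hq n, Finset.sum_range_succ]
    by_cases h : Q n < μout n
    · rw [if_pos h]
      have hmax : max (Q n - μout n) 0 = 0 := max_eq_right (by linarith)
      rw [hmax]
      constructor
      · linarith [hQnn n]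
      · have := houtB n
        have := hQnn n
        nlinarith
    · rw [if_neg h]
      push_neg at h
      have hmax : max (Q n - μout n) 0 = Q n - μout n := max_eq_left (by linarith)
      rw [hmax]
      constructor <;> [linarith; nlinarith]
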